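/- Consider the merge sort CHR^rp program with rules: 1 :: ms1 @ arrow(X,A) \ arrow(X,B) ⇔ A < B | arrow(A,B); 2 :: ms2 @ merge(N,A), merge(N,B) ⇔ A < B | merge(2·N+1,A), arrow(A,B); 3 :: ms3 @ number(X) ⇔ merge(0,X), executed under ω_p from an initial goal of n distinct number/1 constraints. Define a chain of length m−1 from X_1 to X_m in a state as stored constraints arrow(X_1,X_2), arrow(X_2,X_3), ..., arrow(X_{m−1},X_m). Then in every reachable state of priority 2 or lower (i.e., in which no priority-1 rule instance is applicable), for every stored constraint merge(N,X) the maximal length of a chain starting in X is at most N. -/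

import Mathlib

namespace MergeSort

/-- The CHR constraints of the merge sort program: `number X`, `merge N A` and
`arrow A B`. -/
inductive MSC : Type
  | number (x : ℤ)
  | merge (n : ℕ) (a : ℤ)
  | arrow (a b : ℤ)
deriving DecidableEq

/-- Some instance of rule `ms1` (priority 1) is applicable in the store `S`. -/
def ms1App (S : Multiset MSC) : Prop :=
  ∃ X A B : ℤ, A < B ∧ MSC.arrow X A ∈ S ∧ MSC.arrow X B ∈ S

/-- Some instance of rule `ms2` (priority 2) is applicable in the store `S`. -/
def ms2App (S : Multiset MSC) : Prop :=
  ∃ (N : ℕ) (A B : ℤ), A < B ∧ MSC.merge N A ∈ S ∧ MSC.merge N B ∈ S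

/-- Transition labels recording which rule fired (for `ms2` also the value `N` of the
matched `merge` constraints). -/
inductive Lab : Type
  | ms1
  | ms2 (N : ℕ)
  | ms3
deriving DecidableEq

/-- The transitions of the priority semantics ω_p of the merge sort program
`1 :: ms1 @ arrow(X,A) \ arrow(X,B) ⇔ A < B | arrow(A,B)`,
`2 :: ms2 @ merge(N,A), merge(N,B) ⇔ A < B | merge(2·N+1,A), arrow(A,B)`,
`3 :: ms3 @ number(X) ⇔ merge(0,X)`:
among all applicable rule instances, one of highest priority (numerically smallest)
fires, removing the constraints matching removed heads and adding the instantiated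
body.  (The guards `A < B` make the matched head constraints distinct; since no rule is
a propagation rule, no propagation history is needed and states are just multisets of
stored constraints.) -/
inductive Step : Multiset MSC → Lab → Multiset MSC → Prop
  | ms1 (S : Multiset MSC) (X A B : ℤ) :
      A < B → MSC.arrow X A ∈ S → MSC.arrow X B ∈ S →
      Step S Lab.ms1 (MSC.arrow A B ::ₘ S.erase (MSC.arrow X B))
  | ms2 (S : Multiset MSC) (N : ℕ) (A B : ℤ) :
      A < B → MSC.merge N A ∈ S → MSC.merge N B ∈ S →
      ¬ ms1App S →
      Step S (Lab.ms2 N)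
        (MSC.merge (2 * N + 1) A ::ₘ MSC.arrow A B ::ₘ
          ((S.erase (MSC.merge N A)).erase (MSC.merge N B)))
  | ms3 (S : Multiset MSC) (X : ℤ) :
      MSC.number X ∈ S → ¬ ms1App S → ¬ ms2App S →
      Step S Lab.ms3 (MSC.merge 0 X ::ₘ S.erase (MSC.number X))

/-- The initial store: one `number` constraint for each element of `l`. -/
def InitState (l : List ℤ) : Multiset MSC := ↑(l.map MSC.number)

/-- Reachability from the initial store of `l`. -/
def Reach (l : List ℤ) (S : Multiset MSC) : Prop :=
  Relation.ReflTransGen (fun s s' => ∃ lab, Step s lab s') (InitState l) S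

/-- `merge` constraints with first argument `N`. -/
def mergeFst (N : ℕ) : MSC → Bool
  | .merge m _ => m = N
  | _ => false

/-- `arrow` constraints with first argument `V`. -/
def arrowFst (V : ℤ) : MSC → Bool
  | .arrow a _ => a = V
  | _ => false

end MergeSort

namespace MSProof
open MergeSort Relation

def Rel (S : Multiset MSC) (a b : ℤ) : Prop := MSC.arrow a b ∈ S

noncomputable def tgts (S : Multiset MSC) : Finset ℤ :=
  S.toFinset.image (fun c => match c with | .arrow _ b => b | _ => 0)

lemma mem_tgts {S : Multiset MSC} {u v : ℤ} (h : MSC.arrow u v ∈ S) : v ∈ tgts S := by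
  simp only [tgts, Finset.mem_image]
  exact ⟨_, Multiset.mem_toFinset.2 h, rfl⟩

noncomputable def reachF (S : Multiset MSC) (X : ℤ) : Finset ℤ :=
  @Finset.filter _ (fun v => Relation.TransGen (Rel S) X v) (Classical.decPred _) (tgts S)

lemma mem_reachF {S : Multiset MSC} {X v : ℤ} :
    v ∈ reachF S X ↔ Relation.TransGen (Rel S) X v := by
  rw [reachF, @Finset.mem_filter _ _ (Classical.decPred _)]
  constructor
  · exact fun h => h.2
  · intro h
    refine ⟨?_, h⟩
    rcases (Relation.TransGen.tail'_iff).1 h with ⟨b, _, hb⟩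
    exact mem_tgts hb

structure Inv (S : Multiset MSC) : Prop where
  lt : ∀ a b : ℤ, MSC.arrow a b ∈ S → a < b
  insrc : ∀ u u' v : ℤ, MSC.arrow u v ∈ S → MSC.arrow u' v ∈ S → u = u'
  acount : ∀ a b : ℤ, S.count (MSC.arrow a b) ≤ 1
  head : ∀ (N : ℕ) (v u : ℤ), MSC.merge N v ∈ S → MSC.arrow u v ∈ S → False
  mval : ∀ (N M : ℕ) (v : ℤ), MSC.merge N v ∈ S → MSC.merge M v ∈ S → N = M
  mcount : ∀ (N : ℕ) (v : ℤ), S.count (MSC.merge N v) ≤ 1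
  fresh : ∀ x : ℤ, MSC.number x ∈ S →
    (∀ a b : ℤ, MSC.arrow a b ∈ S → x ≠ a ∧ x ≠ b) ∧
    (∀ N : ℕ, MSC.merge N x ∉ S) ∧ S.count (MSC.number x) ≤ 1
  bound : ∀ (N : ℕ) (X : ℤ), MSC.merge N X ∈ S → (reachF S X).card ≤ N

lemma count_le_one_not_mem_erase {S : Multiset MSC} {c : MSC} (h : S.count c ≤ 1) :
    c ∉ S.erase c := by
  intro hc
  have h2 := Multiset.count_pos.2 hc
  rw [Multiset.count_erase_self] at h2
  omega

lemma count_erase_le {S : Multiset MSC} (c d : MSC) :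
    (S.erase d).count c ≤ S.count c :=
  Multiset.count_le_of_le c (Multiset.erase_le d S)

lemma inv_ms1 {S : Multiset MSC} {X A B : ℤ} (hI : Inv S) (hAB : A < B)
    (hA : MSC.arrow X A ∈ S) (hB : MSC.arrow X B ∈ S) :
    Inv (MSC.arrow A B ::ₘ S.erase (MSC.arrow X B)) := by
  set S' := MSC.arrow A B ::ₘ S.erase (MSC.arrow X B) with hS'def
  have hXB_not : MSC.arrow X B ∉ S.erase (MSC.arrow X B) :=
    count_le_one_not_mem_erase (hI.acount X B)
  have harr : ∀ u v : ℤ, MSC.arrow u v ∈ S' ↔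
      ((u = A ∧ v = B) ∨ (MSC.arrow u v ∈ S ∧ ¬(u = X ∧ v = B))) := by
    intro u v
    constructor
    · intro h
      rcases Multiset.mem_cons.1 h with h | h
      · rw [MSC.arrow.injEq] at h; exact Or.inl h
      · refine Or.inr ⟨Multiset.mem_of_mem_erase h, ?_⟩
        rintro ⟨rfl, rfl⟩; exact hXB_not h
    · rintro (⟨rfl, rfl⟩ | ⟨h1, h2⟩)
      · exact Multiset.mem_cons_self _ _
      · refine Multiset.mem_cons_of_mem ?_
        rw [Multiset.mem_erase_of_ne (fun he => h2 (by rwa [MSC.arrow.injEq] at he))]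
        exact h1
  have hmrg : ∀ (M : ℕ) (Y : ℤ), MSC.merge M Y ∈ S' ↔ MSC.merge M Y ∈ S := by
    intro M Y
    rw [hS'def, Multiset.mem_cons]
    simp only [reduceCtorEq, false_or]
    exact Multiset.mem_erase_of_ne (by simp)
  have hnum : ∀ x : ℤ, MSC.number x ∈ S' ↔ MSC.number x ∈ S := by
    intro x
    rw [hS'def, Multiset.mem_cons]
    simp only [reduceCtorEq, false_or]
    exact Multiset.mem_erase_of_ne (by simp)
  constructor
  · -- lt
    intro a b h
    rcases (harr a b).1 h with ⟨rfl, rfl⟩ | ⟨h1, _⟩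
    · exact hAB
    · exact hI.lt a b h1
  · -- insrc
    intro u u' v h h'
    rcases (harr u v).1 h with ⟨hu, hv⟩ | ⟨h1, h2⟩ <;>
      rcases (harr u' v).1 h' with ⟨hu', hv'⟩ | ⟨h1', h2'⟩
    · rw [hu, hu']
    · exact absurd ⟨hI.insrc u' X v h1' (hv ▸ hB), hv⟩ h2'
    · exact absurd ⟨hI.insrc u X v h1 (hv' ▸ hB), hv'⟩ h2
    · exact hI.insrc u u' v h1 h1'
  · -- acount
    intro a b
    rw [hS'def, Multiset.count_cons]
    by_cases hab : MSC.arrow a b = MSC.arrow A B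
    · rw [hab, if_pos rfl]
      have hnotS : MSC.arrow A B ∉ S := by
        intro hin
        have : A = X := hI.insrc A X B hin hB
        subst this
        exact absurd (hI.lt A A hA).false (by simp)
      have hz : (S.erase (MSC.arrow X B)).count (MSC.arrow A B) = 0 := by
        have := count_erase_le (S := S) (MSC.arrow A B) (MSC.arrow X B)
        rw [Multiset.count_eq_zero.2 hnotS] at this
        omega
      omega
    · rw [if_neg hab]
      have := count_erase_le (S := S) (MSC.arrow a b) (MSC.arrow X B)
      have := hI.acount a b
      omega
  · -- head
    intro M v u hm ha
    have hmS := (hmrg M v).1 hm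
    rcases (harr u v).1 ha with ⟨hu, hv⟩ | ⟨h1, _⟩
    · exact hI.head M v X hmS (hv ▸ hB)
    · exact hI.head M v u hmS h1
  · -- mval
    intro M M' v h h'
    exact hI.mval M M' v ((hmrg M v).1 h) ((hmrg M' v).1 h')
  · -- mcount
    intro M v
    rw [hS'def, Multiset.count_cons, if_neg (by simp)]
    have h1 := count_erase_le (S := S) (MSC.merge M v) (MSC.arrow X B)
    have := hI.mcount M v
    omega
  · -- fresh
    intro x hx
    obtain ⟨f1, f2, f3⟩ := hI.fresh x ((hnum x).1 hx)
    refine ⟨?_, ?_, ?_⟩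
    · intro a b h
      rcases (harr a b).1 h with ⟨hu, hv⟩ | ⟨h1, _⟩
      · rw [hu, hv]
        exact ⟨(f1 X A hA).2, (f1 X B hB).2⟩
      · exact f1 a b h1
    · intro M hm
      exact f2 M ((hmrg M x).1 hm)
    · rw [hS'def, Multiset.count_cons, if_neg (by simp)]
      have h1 := count_erase_le (S := S) (MSC.number x) (MSC.arrow X B)
      omega
  · -- bound
    intro M Y hm
    have hmS := (hmrg M Y).1 hm
    have hYA : Y ≠ A := fun h => hI.head M Y X hmS (h ▸ hA)
    have key : ∀ v, TransGen (Rel S') Y v → TransGen (Rel S) Y v := by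
      intro v h
      induction h with
      | single h1 =>
          rcases (harr Y _).1 h1 with ⟨h2, _⟩ | ⟨h2, _⟩
          · exact absurd h2 hYA
          · exact TransGen.single h2
      | tail h1 h2 ih =>
          rcases (harr _ _).1 h2 with ⟨hu, hv⟩ | ⟨h3, _⟩
          · rw [hu] at ih
            rcases (TransGen.tail'_iff).1 ih with ⟨w, hw, hwA⟩
            have hwX : w = X := hI.insrc w X A hwA hA
            rw [hwX] at hw
            rw [hv]
            exact TransGen.tail' hw hB
          · exact TransGen.tail ih h3
    calc (reachF S' Y).card ≤ (reachF S Y).card :=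
          Finset.card_le_card (fun v hv => mem_reachF.2 (key v (mem_reachF.1 hv)))
      _ ≤ M := hI.bound M Y hmS

lemma inv_ms2 {S : Multiset MSC} {N : ℕ} {A B : ℤ} (hI : Inv S) (hAB : A < B)
    (hA : MSC.merge N A ∈ S) (hB : MSC.merge N B ∈ S) :
    Inv (MSC.merge (2 * N + 1) A ::ₘ MSC.arrow A B ::ₘ
        ((S.erase (MSC.merge N A)).erase (MSC.merge N B))) := by
  set S' := MSC.merge (2 * N + 1) A ::ₘ MSC.arrow A B ::ₘ
      ((S.erase (MSC.merge N A)).erase (MSC.merge N B)) with hS'def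
  have hABne : A ≠ B := ne_of_lt hAB
  have harr : ∀ u v : ℤ, MSC.arrow u v ∈ S' ↔
      ((u = A ∧ v = B) ∨ MSC.arrow u v ∈ S) := by
    intro u v
    rw [hS'def, Multiset.mem_cons, Multiset.mem_cons]
    simp only [reduceCtorEq, false_or, MSC.arrow.injEq]
    constructor
    · rintro (h | h)
      · exact Or.inl h
      · exact Or.inr (Multiset.mem_of_mem_erase (Multiset.mem_of_mem_erase h))
    · rintro (h | h)
      · exact Or.inl h
      · refine Or.inr ?_
        rw [Multiset.mem_erase_of_ne (by simp), Multiset.mem_erase_of_ne (by simp)]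
        exact h
  have hmrg2 : ∀ (M : ℕ) (Y : ℤ),
      MSC.merge M Y ∈ (S.erase (MSC.merge N A)).erase (MSC.merge N B) →
      MSC.merge M Y ∈ S ∧ Y ≠ A ∧ Y ≠ B := by
    intro M Y h
    have hS : MSC.merge M Y ∈ S := Multiset.mem_of_mem_erase (Multiset.mem_of_mem_erase h)
    refine ⟨hS, ?_, ?_⟩
    · rintro rfl
      have hMN : M = N := hI.mval M N Y hS hA
      rw [hMN] at h
      exact count_le_one_not_mem_erase (S := S) (hI.mcount N Y)
        (Multiset.mem_of_mem_erase h)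
    · rintro rfl
      have hMN : M = N := hI.mval M N Y hS hB
      rw [hMN] at h
      have hcnt : (S.erase (MSC.merge N A)).count (MSC.merge N Y) ≤ 1 := by
        have := count_erase_le (S := S) (MSC.merge N Y) (MSC.merge N A)
        have := hI.mcount N Y
        omega
      exact count_le_one_not_mem_erase hcnt h
  have hmrg : ∀ (M : ℕ) (Y : ℤ), MSC.merge M Y ∈ S' ↔
      ((M = 2 * N + 1 ∧ Y = A) ∨
        (MSC.merge M Y ∈ S ∧ Y ≠ A ∧ Y ≠ B)) := by
    intro M Y
    rw [hS'def, Multiset.mem_cons, Multiset.mem_cons]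
    simp only [reduceCtorEq, false_or, MSC.merge.injEq]
    constructor
    · rintro (h | h)
      · exact Or.inl h
      · exact Or.inr (hmrg2 M Y h)
    · rintro (h | ⟨h1, h2, h3⟩)
      · exact Or.inl h
      · refine Or.inr ?_
        rw [Multiset.mem_erase_of_ne (by simp [h3]), Multiset.mem_erase_of_ne (by simp [h2])]
        exact h1
  have hnum : ∀ x : ℤ, MSC.number x ∈ S' ↔ MSC.number x ∈ S := by
    intro x
    rw [hS'def, Multiset.mem_cons, Multiset.mem_cons]
    simp only [reduceCtorEq, false_or]
    rw [Multiset.mem_erase_of_ne (by simp), Multiset.mem_erase_of_ne (by simp)]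
  have cntS' : ∀ c : MSC, c ≠ MSC.merge (2 * N + 1) A → c ≠ MSC.arrow A B →
      S'.count c ≤ S.count c := by
    intro c h1 h2
    rw [hS'def, Multiset.count_cons, Multiset.count_cons, if_neg h1, if_neg h2]
    have := count_erase_le (S := S.erase (MSC.merge N A)) c (MSC.merge N B)
    have := count_erase_le (S := S) c (MSC.merge N A)
    omega
  constructor
  · -- lt
    intro a b h
    rcases (harr a b).1 h with ⟨hu, hv⟩ | h1
    · rw [hu, hv]; exact hAB
    · exact hI.lt a b h1
  · -- insrc
    intro u u' v h h'
    rcases (harr u v).1 h with ⟨hu, hv⟩ | h1 <;>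
      rcases (harr u' v).1 h' with ⟨hu', hv'⟩ | h1'
    · rw [hu, hu']
    · exact absurd (hI.head N v u' (show MSC.merge N v ∈ S by rw [hv]; exact hB) h1') id
    · exact absurd (hI.head N v u (show MSC.merge N v ∈ S by rw [hv']; exact hB) h1) id
    · exact hI.insrc u u' v h1 h1'
  · -- acount
    intro a b
    by_cases hab : MSC.arrow a b = MSC.arrow A B
    · have h2 : MSC.arrow A B ∉ (S.erase (MSC.merge N A)).erase (MSC.merge N B) := by
        intro hmem
        exact hI.head N B A hB (Multiset.mem_of_mem_erase (Multiset.mem_of_mem_erase hmem))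
      rw [hab, hS'def, Multiset.count_cons, Multiset.count_cons,
        Multiset.count_eq_zero.2 h2]
      simp
    · have := cntS' (MSC.arrow a b) (by simp) hab
      have := hI.acount a b
      omega
  · -- head
    intro M v u hm ha
    rcases (hmrg M v).1 hm with ⟨hM, hv⟩ | ⟨h1, h2, h3⟩ <;>
      rcases (harr u v).1 ha with ⟨hu', hv'⟩ | ha1
    · exact hABne (hv.symm.trans hv')
    · exact hI.head N v u (show MSC.merge N v ∈ S by rw [hv]; exact hA) ha1
    · exact h3 hv'
    · exact hI.head M v u h1 ha1
  · -- mval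
    intro M M' v h h'
    rcases (hmrg M v).1 h with ⟨hM, hv⟩ | ⟨h1, h2, h3⟩ <;>
      rcases (hmrg M' v).1 h' with ⟨hM', hv'⟩ | ⟨h1', h2', h3'⟩
    · rw [hM, hM']
    · exact absurd hv h2'
    · exact absurd hv' h2
    · exact hI.mval M M' v h1 h1'
  · -- mcount
    intro M v
    by_cases hmv : MSC.merge M v = MSC.merge (2 * N + 1) A
    · have h2 : MSC.merge (2 * N + 1) A ∉ (S.erase (MSC.merge N A)).erase (MSC.merge N B) := by
        intro hmem
        have hin : MSC.merge (2 * N + 1) A ∈ S :=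
          Multiset.mem_of_mem_erase (Multiset.mem_of_mem_erase hmem)
        have := hI.mval (2 * N + 1) N A hin hA
        omega
      rw [hmv, hS'def, Multiset.count_cons, Multiset.count_cons,
        Multiset.count_eq_zero.2 h2]
      simp
    · have := cntS' (MSC.merge M v) hmv (by simp)
      have := hI.mcount M v
      omega
  · -- fresh
    intro x hx
    obtain ⟨f1, f2, f3⟩ := hI.fresh x ((hnum x).1 hx)
    refine ⟨?_, ?_, ?_⟩
    · intro a b h
      rcases (harr a b).1 h with ⟨hu, hv⟩ | h1
      · constructor
        · rintro rfl; exact f2 N (hu ▸ hA)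
        · rintro rfl; exact f2 N (hv ▸ hB)
      · exact f1 a b h1
    · intro M hm
      rcases (hmrg M x).1 hm with ⟨hM, hv⟩ | ⟨h1, _, _⟩
      · exact f2 N (hv ▸ hA)
      · exact f2 M h1
    · have := cntS' (MSC.number x) (by simp) (by simp)
      omega
  · -- bound
    intro M Y hm
    rcases (hmrg M Y).1 hm with ⟨hM, hY⟩ | ⟨h1, h2, h3⟩
    · -- the new merge constraint
      have key : ∀ v, TransGen (Rel S') A v →
          Relation.TransGen (Rel S) A v ∨ v = B ∨ Relation.TransGen (Rel S) B v := by
        intro v h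
        induction h with
        | single h1 =>
            rcases (harr A _).1 h1 with ⟨_, hv⟩ | h2
            · exact Or.inr (Or.inl hv)
            · exact Or.inl (TransGen.single h2)
        | tail h1 h2 ih =>
            rcases (harr _ _).1 h2 with ⟨hu, hv⟩ | h3
            · exact Or.inr (Or.inl hv)
            · rcases ih with ih | ih | ih
              · exact Or.inl (TransGen.tail ih h3)
              · exact Or.inr (Or.inr (TransGen.single (ih ▸ h3)))
              · exact Or.inr (Or.inr (TransGen.tail ih h3))
      have hsub : reachF S' A ⊆ reachF S A ∪ ({B} ∪ reachF S B) := by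
        intro v hv
        rcases key v (mem_reachF.1 hv) with h | h | h
        · exact Finset.mem_union_left _ (mem_reachF.2 h)
        · exact Finset.mem_union_right _ (Finset.mem_union_left _ (by simp [h]))
        · exact Finset.mem_union_right _ (Finset.mem_union_right _ (mem_reachF.2 h))
      rw [hM, hY]
      calc (reachF S' A).card ≤ (reachF S A ∪ ({B} ∪ reachF S B)).card :=
            Finset.card_le_card hsub
        _ ≤ (reachF S A).card + ({B} ∪ reachF S B).card := Finset.card_union_le _ _
        _ ≤ (reachF S A).card + (({B} : Finset ℤ).card + (reachF S B).card) := by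
            have := Finset.card_union_le ({B} : Finset ℤ) (reachF S B)
            omega
        _ ≤ N + (1 + N) := by
            have := hI.bound N A hA
            have := hI.bound N B hB
            simp only [Finset.card_singleton]
            omega
        _ = 2 * N + 1 := by omega
    · -- an old merge constraint
      have hnoA : ∀ u, ¬ Rel S u A := fun u h => hI.head N A u hA h
      have key : ∀ v, TransGen (Rel S') Y v → Relation.TransGen (Rel S) Y v := by
        intro v h
        induction h with
        | single h1 =>
            rcases (harr Y _).1 h1 with ⟨hu, _⟩ | h2
            · exact absurd hu h2
            · exact TransGen.single h2
        | tail h1 h2 ih =>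
            rcases (harr _ _).1 h2 with ⟨hu, hv⟩ | h3
            · rw [hu] at ih
              rcases (TransGen.tail'_iff).1 ih with ⟨w, _, hwA⟩
              exact absurd hwA (hnoA w)
            · exact TransGen.tail ih h3
      calc (reachF S' Y).card ≤ (reachF S Y).card :=
            Finset.card_le_card (fun v hv => mem_reachF.2 (key v (mem_reachF.1 hv)))
        _ ≤ M := hI.bound M Y h1


lemma inv_ms3 {S : Multiset MSC} {X : ℤ} (hI : Inv S) (hX : MSC.number X ∈ S) :
    Inv (MSC.merge 0 X ::ₘ S.erase (MSC.number X)) := by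
  set S' := MSC.merge 0 X ::ₘ S.erase (MSC.number X) with hS'def
  obtain ⟨f1, f2, f3⟩ := hI.fresh X hX
  have harr : ∀ u v : ℤ, MSC.arrow u v ∈ S' ↔ MSC.arrow u v ∈ S := by
    intro u v
    rw [hS'def, Multiset.mem_cons]
    simp only [reduceCtorEq, false_or]
    exact Multiset.mem_erase_of_ne (by simp)
  have hmrg : ∀ (M : ℕ) (Y : ℤ), MSC.merge M Y ∈ S' ↔
      ((M = 0 ∧ Y = X) ∨ MSC.merge M Y ∈ S) := by
    intro M Y
    rw [hS'def, Multiset.mem_cons]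
    simp only [MSC.merge.injEq]
    rw [Multiset.mem_erase_of_ne (by simp)]
  have hnum : ∀ x : ℤ, MSC.number x ∈ S' → MSC.number x ∈ S ∧ x ≠ X := by
    intro x h
    rcases Multiset.mem_cons.1 h with h | h
    · exact absurd h (by simp)
    · have hS : MSC.number x ∈ S := Multiset.mem_of_mem_erase h
      refine ⟨hS, ?_⟩
      rintro rfl
      exact count_le_one_not_mem_erase f3 h
  have htg : ∀ Y v : ℤ, TransGen (Rel S') Y v ↔ TransGen (Rel S) Y v := by
    intro Y v
    constructor
    · exact fun h => TransGen.mono (fun a b hab => (harr a b).1 hab) _ _ h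
    · exact fun h => TransGen.mono (fun a b hab => (harr a b).2 hab) _ _ h
  constructor
  · intro a b h
    exact hI.lt a b ((harr a b).1 h)
  · intro u u' v h h'
    exact hI.insrc u u' v ((harr u v).1 h) ((harr u' v).1 h')
  · intro a b
    rw [hS'def, Multiset.count_cons, if_neg (by simp)]
    have := count_erase_le (S := S) (MSC.arrow a b) (MSC.number X)
    have := hI.acount a b
    omega
  · intro M v u hm ha
    have ha1 := (harr u v).1 ha
    rcases (hmrg M v).1 hm with ⟨_, hv⟩ | h1
    · exact (f1 u v ha1).2 hv.symm
    · exact hI.head M v u h1 ha1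
  · intro M M' v h h'
    rcases (hmrg M v).1 h with ⟨hM, hv⟩ | h1 <;>
      rcases (hmrg M' v).1 h' with ⟨hM', hv'⟩ | h1'
    · rw [hM, hM']
    · exact absurd (show MSC.merge M' X ∈ S by rw [← hv]; exact h1') (f2 M')
    · exact absurd (show MSC.merge M X ∈ S by rw [← hv']; exact h1) (f2 M)
    · exact hI.mval M M' v h1 h1'
  · intro M v
    by_cases hmv : MSC.merge M v = MSC.merge 0 X
    · have h2 : MSC.merge 0 X ∉ S.erase (MSC.number X) := by
        intro hmem
        exact f2 0 (Multiset.mem_of_mem_erase hmem)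
      rw [hmv, hS'def, Multiset.count_cons, Multiset.count_eq_zero.2 h2]
      simp
    · rw [hS'def, Multiset.count_cons, if_neg hmv]
      have := count_erase_le (S := S) (MSC.merge M v) (MSC.number X)
      have := hI.mcount M v
      omega
  · intro x hx
    obtain ⟨hxS, hxX⟩ := hnum x hx
    obtain ⟨g1, g2, g3⟩ := hI.fresh x hxS
    refine ⟨?_, ?_, ?_⟩
    · intro a b h
      exact g1 a b ((harr a b).1 h)
    · intro M hm
      rcases (hmrg M x).1 hm with ⟨_, hv⟩ | h1
      · exact hxX hv
      · exact g2 M h1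
    · rw [hS'def, Multiset.count_cons, if_neg (by simp),
        Multiset.count_erase_of_ne (by simp [hxX])]
      exact g3
  · intro M Y hm
    rcases (hmrg M Y).1 hm with ⟨hM, hY⟩ | h1
    · rw [hM]
      have : reachF S' Y = ∅ := by
        apply Finset.eq_empty_of_forall_notMem
        intro v hv
        have h := (htg Y v).1 (mem_reachF.1 hv)
        rcases (Relation.TransGen.head'_iff).1 h with ⟨b, hb, _⟩
        rw [hY] at hb
        exact (f1 X b hb).1 rfl
      simp [this]
    · calc (reachF S' Y).card ≤ (reachF S Y).card := by
            apply Finset.card_le_card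
            intro v hv
            exact mem_reachF.2 ((htg Y v).1 (mem_reachF.1 hv))
        _ ≤ M := hI.bound M Y h1

lemma inv_init (l : List ℤ) (h : l.Nodup) : Inv (InitState l) := by
  have hmem : ∀ c : MSC, c ∈ InitState l → ∃ x : ℤ, c = MSC.number x := by
    intro c hc
    rw [InitState, Multiset.mem_coe, List.mem_map] at hc
    obtain ⟨x, _, rfl⟩ := hc
    exact ⟨x, rfl⟩
  have hnd : (InitState l).Nodup := by
    rw [InitState, Multiset.coe_nodup]
    exact h.map (fun a b hab => by injection hab)
  have hcnt : ∀ c : MSC, (InitState l).count c ≤ 1 :=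
    fun c => Multiset.nodup_iff_count_le_one.1 hnd c
  have hnoarr : ∀ a b : ℤ, MSC.arrow a b ∉ InitState l := by
    intro a b hc
    obtain ⟨x, hx⟩ := hmem _ hc
    exact absurd hx (by simp)
  have hnomrg : ∀ (N : ℕ) (v : ℤ), MSC.merge N v ∉ InitState l := by
    intro N v hc
    obtain ⟨x, hx⟩ := hmem _ hc
    exact absurd hx (by simp)
  constructor
  · exact fun a b hc => absurd hc (hnoarr a b)
  · exact fun u u' v hc _ => absurd hc (hnoarr u v)
  · exact fun a b => hcnt _
  · exact fun N v u hm _ => hnomrg N v hm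
  · exact fun N M v hm _ => absurd hm (hnomrg N v)
  · exact fun N v => hcnt _
  · intro x _
    exact ⟨fun a b hc => absurd hc (hnoarr a b), fun N hm => hnomrg N x hm, hcnt _⟩
  · exact fun N Y hm => absurd hm (hnomrg N Y)

lemma inv_step {S S' : Multiset MSC} {lab : Lab} (hI : Inv S) (h : Step S lab S') :
    Inv S' := by
  cases h with
  | ms1 X A B h1 h2 h3 => exact inv_ms1 hI h1 h2 h3
  | ms2 N A B h1 h2 h3 _ => exact inv_ms2 hI h1 h2 h3
  | ms3 X h1 _ _ => exact inv_ms3 hI h1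

lemma inv_reach {l : List ℤ} {S : Multiset MSC} (hnd : l.Nodup) (hS : Reach l S) :
    Inv S := by
  induction hS with
  | refl => exact inv_init l hnd
  | tail _ hstep ih =>
      obtain ⟨lab, hlab⟩ := hstep
      exact inv_step ih hlab

lemma chain_reach {S : Multiset MSC} :
    ∀ (cs : List ℤ) (X : ℤ), List.Chain (Rel S) X cs →
      ∀ c ∈ cs, Relation.TransGen (Rel S) X c := by
  intro cs
  induction cs with
  | nil => intro X _ c hc; exact absurd hc (List.not_mem_nil (a := c))
  | cons b cs ih =>
      intro X hch c hc
      rw [List.Chain, List.isChain_cons_cons] at hch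
      rcases List.mem_cons.1 hc with rfl | hc
      · exact TransGen.single hch.1
      · exact TransGen.head hch.1 (ih b hch.2 c hc)

lemma main_bound {S : Multiset MSC} (hI : Inv S) :
    ∀ (N : ℕ) (X : ℤ), MSC.merge N X ∈ S →
      ∀ cs : List ℤ, List.Chain (fun a b => MSC.arrow a b ∈ S) X cs →
        cs.length ≤ N := by
  intro N X hm cs hchain
  have hchain' : List.Chain (Rel S) X cs := hchain
  have hsub : ∀ c ∈ cs, Relation.TransGen (Rel S) X c := chain_reach cs X hchain'
  have hlt : List.Chain (· < ·) X cs := List.Chain.imp (fun a b h => hI.lt a b h) hchain'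
  have hpw : (X :: cs).Pairwise (· < ·) := List.isChain_iff_pairwise.1 hlt
  have hnd : cs.Nodup := (List.Pairwise.of_cons hpw).imp (fun h => ne_of_lt h)
  have hss : cs.toFinset ⊆ reachF S X := by
    intro v hv
    exact mem_reachF.2 (hsub v (List.mem_toFinset.1 hv))
  calc cs.length = cs.toFinset.card := (List.toFinset_card_of_nodup hnd).symm
    _ ≤ (reachF S X).card := Finset.card_le_card hss
    _ ≤ N := hI.bound N X hm

end MSProof

open MergeSort in
/-- In the merge sort CHR^rp program executed under ω_p from an initial goal of `n`
distinct `number/1` constraints: in every reachable state of priority 2 or lower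
(i.e., in which no priority-1 rule instance is applicable), for every stored
constraint `merge N X` the maximal length of a chain starting in `X` is at most `N`
(a chain of length `m` from `X` is a list `X₁, …, X_m` with
`arrow X X₁, arrow X₁ X₂, …, arrow X_{m−1} X_m` all stored). -/
theorem merge_bounds_chain_length
    (n : ℕ) (l : List ℤ) (hlen : l.length = n) (hnodup : l.Nodup)
    (S : Multiset MSC) (hS : Reach l S) (hprio : ¬ ms1App S) :
    ∀ (N : ℕ) (X : ℤ), MSC.merge N X ∈ S →
      ∀ cs : List ℤ, List.Chain (fun a b => MSC.arrow a b ∈ S) X cs →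
        cs.length ≤ N := by
  exact MSProof.main_bound (MSProof.inv_reach hnodup hS)
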